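/- Let G be a near-bipartite brick with removable doubleton {e1, e2}, and let H = G − {e1, e2}. Then every vertex of G is incident with at most one edge that is nonremovable in G but removable in H. -/

import Mathlib

open SimpleGraph Set

universe u
variable {V : Type u}

/-- Number of odd components of a graph. -/
noncomputable def oddComps (G : SimpleGraph V) : ℕ :=
  Nat.card {c : G.ConnectedComponent // Odd (Nat.card c.supp)}

/-- `S` is a barrier of `G`: the number of odd components of `G − S` equals `|S|`. -/
def IsBarrier (G : SimpleGraph V) (S : Set V) : Prop :=
  oddComps (G.induce Sᶜ) = S.ncard

/-- `G` has a perfect matching. -/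
def HasPM (G : SimpleGraph V) : Prop :=
  ∃ M : Subgraph G, M.IsPerfectMatching

/-- `G` is matching covered. -/
def MatchingCovered (G : SimpleGraph V) : Prop :=
  G.Connected ∧ G.edgeSet.Nonempty ∧
    ∀ e ∈ G.edgeSet, ∃ M : Subgraph G, M.IsPerfectMatching ∧ e ∈ M.edgeSet

/-- An edge `e` of a matching covered graph `G` is removable. -/
def Removable (G : SimpleGraph V) (e : Sym2 V) : Prop :=
  e ∈ G.edgeSet ∧ MatchingCovered (G.deleteEdges {e})

/-- `G` is 3-connected. -/
def ThreeConnected (G : SimpleGraph V) : Prop :=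
  4 ≤ Nat.card V ∧ ∀ S : Set V, S.ncard ≤ 2 → (G.induce Sᶜ).Connected

/-- A brick. -/
def IsBrick (G : SimpleGraph V) : Prop :=
  ThreeConnected G ∧ ∀ x y : V, x ≠ y → HasPM (G.induce ({x, y} : Set V)ᶜ)

/-- neighbours outside `S` of vertices of `S`. -/
def Nbrs (G : SimpleGraph V) (S : Set V) : Set V :=
  {v | v ∉ S ∧ ∃ u ∈ S, G.Adj u v}

/-- factor-critical graph. -/
def FactorCritical (G : SimpleGraph V) : Prop :=
  ∀ v : V, HasPM (G.induce ({v} : Set V)ᶜ)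

/-- `(U, W)` is a bipartition of `G`. -/
def IsBipartition (G : SimpleGraph V) (U W : Set V) : Prop :=
  Disjoint U W ∧ U ∪ W = Set.univ ∧
    ∀ a b : V, G.Adj a b → (a ∈ U ∧ b ∈ W) ∨ (a ∈ W ∧ b ∈ U)

lemma pm_lift {G1 G2 : SimpleGraph V} (h : G1 ≤ G2) (M : Subgraph G1)
    (hM : M.IsPerfectMatching) :
    ∃ M2 : Subgraph G2, M2.IsPerfectMatching ∧ M2.edgeSet = M.edgeSet := by
  refine ⟨⟨Set.univ, M.Adj, fun ha => h (M.adj_sub ha), fun _ => trivial, M.symm⟩,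
    ⟨?_, fun v => trivial⟩, ?_⟩
  · intro v _
    exact hM.1 (hM.2 v)
  · ext e
    induction e using Sym2.ind with
    | _ x y => simp [Subgraph.mem_edgeSet]

lemma pm_to_deleted {G : SimpleGraph V} (s : Set (Sym2 V)) (M : Subgraph G)
    (hM : M.IsPerfectMatching) (hdisj : ∀ e ∈ s, e ∉ M.edgeSet) :
    ∃ M2 : Subgraph (G.deleteEdges s), M2.IsPerfectMatching ∧ M2.edgeSet = M.edgeSet := by
  refine ⟨⟨Set.univ, M.Adj, fun {x y} ha => deleteEdges_adj.mpr
      ⟨M.adj_sub ha, fun hs => hdisj _ hs (Subgraph.mem_edgeSet.mpr ha)⟩,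
      fun _ => trivial, M.symm⟩, ⟨?_, fun v => trivial⟩, ?_⟩
  · intro v _
    exact hM.1 (hM.2 v)
  · ext e
    induction e using Sym2.ind with
    | _ x y => simp [Subgraph.mem_edgeSet]

lemma pm_extend {G : SimpleGraph V} {a b : V} (hab : G.Adj a b)
    (h : HasPM (G.induce ({a, b} : Set V)ᶜ)) :
    ∃ M : Subgraph G, M.IsPerfectMatching ∧ s(a, b) ∈ M.edgeSet := by
  obtain ⟨N, hN⟩ := h
  refine ⟨⟨Set.univ,
    fun x y => (x = a ∧ y = b) ∨ (x = b ∧ y = a) ∨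
      ∃ (hx : x ∈ ({a, b} : Set V)ᶜ) (hy : y ∈ ({a, b} : Set V)ᶜ),
        N.Adj ⟨x, hx⟩ ⟨y, hy⟩, ?_, fun _ => trivial, ?_⟩,
    ⟨?_, fun v => trivial⟩, ?_⟩
  · rintro x y (⟨rfl, rfl⟩ | ⟨rfl, rfl⟩ | ⟨hx, hy, hadj⟩)
    · exact hab
    · exact hab.symm
    · exact N.adj_sub hadj
  · constructor
    rintro x y (⟨rfl, rfl⟩ | ⟨rfl, rfl⟩ | ⟨hx, hy, hadj⟩)
    · exact Or.inr (Or.inl ⟨rfl, rfl⟩)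
    · exact Or.inl ⟨rfl, rfl⟩
    · exact Or.inr (Or.inr ⟨hy, hx, hadj.symm⟩)
  · intro v _
    by_cases hva : v = a
    · refine ⟨b, Or.inl ⟨hva, rfl⟩, ?_⟩
      rintro y (⟨-, rfl⟩ | ⟨h1, -⟩ | ⟨hx, -, -⟩)
      · rfl
      · exact absurd (hva ▸ h1 : a = b).symm hab.ne.symm
      · exact absurd hx (by simp [hva])
    · by_cases hvb : v = b
      · refine ⟨a, Or.inr (Or.inl ⟨hvb, rfl⟩), ?_⟩
        rintro y (⟨h1, -⟩ | ⟨-, rfl⟩ | ⟨hx, -, -⟩)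
        · exact absurd (hvb ▸ h1 : b = a).symm hab.ne
        · rfl
        · exact absurd hx (by simp [hvb])
      · have hvS : v ∈ ({a, b} : Set V)ᶜ := by simp [hva, hvb]
        obtain ⟨w, hw, hwu⟩ := hN.1 (hN.2 ⟨v, hvS⟩)
        refine ⟨(w : V), Or.inr (Or.inr ⟨hvS, w.2, by simpa using hw⟩), ?_⟩
        rintro y (⟨h1, -⟩ | ⟨h1, -⟩ | ⟨hx, hy, hadj⟩)
        · exact absurd h1 hva
        · exact absurd h1 hvb
        · have := hwu ⟨y, hy⟩ (by convert hadj)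
          exact congrArg Subtype.val this
  · exact Subgraph.mem_edgeSet.mpr (Or.inl ⟨rfl, rfl⟩)

lemma key {G K : SimpleGraph V} {e0 : Sym2 V} {rs : Set (Sym2 V)}
    (hK : K ≤ G.deleteEdges {e0})
    (hKmc : MatchingCovered K)
    (hnmc : ¬ MatchingCovered (G.deleteEdges {e0}))
    (hcover : ∀ e' ∈ G.edgeSet, e' ≠ e0 → e' ∈ K.edgeSet ∨ e' ∈ rs) :
    ∃ e' ∈ rs, ∀ M : Subgraph G, M.IsPerfectMatching →
      e' ∈ M.edgeSet → e0 ∈ M.edgeSet := by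
  have hconn : (G.deleteEdges {e0}).Connected := hKmc.1.mono hK
  have hne : (G.deleteEdges {e0}).edgeSet.Nonempty := by
    obtain ⟨e, he⟩ := hKmc.2.1
    exact ⟨e, edgeSet_mono hK he⟩
  rw [MatchingCovered] at hnmc
  push_neg at hnmc
  obtain ⟨e', he'mem, hno⟩ := hnmc hconn hne
  rw [edgeSet_deleteEdges, Set.mem_diff, Set.mem_singleton_iff] at he'mem
  rcases hcover e' he'mem.1 he'mem.2 with hK' | hrs
  · obtain ⟨N, hN, hNe⟩ := hKmc.2.2 e' hK'
    obtain ⟨N2, hN2, hN2e⟩ := pm_lift hK N hN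
    exact (hno N2 hN2 (hN2e ▸ hNe)).elim
  · refine ⟨e', hrs, fun M hM he'M => ?_⟩
    by_contra h0
    obtain ⟨M2, hM2, hM2e⟩ := pm_to_deleted {e0} M hM
      (by rintro e rfl; exact h0)
    exact hno M2 hM2 (hM2e ▸ he'M)

/-- every vertex of a near-bipartite brick is incident with at
most one nonremovable edge of type I. -/
theorem stmt9 [Fintype V] (G : SimpleGraph V) (hG : IsBrick G)
    (a1 b1 a2 b2 : V) (he1 : G.Adj a1 b1) (he2 : G.Adj a2 b2)
    (hnee : s(a1, b1) ≠ s(a2, b2))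
    (hnr1 : ¬ Removable G s(a1, b1)) (hnr2 : ¬ Removable G s(a2, b2))
    (hH : MatchingCovered (G.deleteEdges {s(a1, b1), s(a2, b2)}))
    (hbip : (G.deleteEdges {s(a1, b1), s(a2, b2)}).Colorable 2) :
    ∀ v : V,
      {e : Sym2 V | v ∈ e ∧ e ≠ s(a1, b1) ∧ e ≠ s(a2, b2) ∧ e ∈ G.edgeSet ∧
        ¬ Removable G e ∧
        Removable (G.deleteEdges {s(a1, b1), s(a2, b2)}) e}.ncard ≤ 1 := by
  intro v
  -- From non-removability of e2: every perfect matching of G containing e1 contains e2.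
  have hle2 : G.deleteEdges {s(a1, b1), s(a2, b2)} ≤ G.deleteEdges {s(a2, b2)} := by
    intro x y hxy
    rw [deleteEdges_adj] at hxy ⊢
    exact ⟨hxy.1, fun h => hxy.2 (by simp [Set.mem_singleton_iff.mp h])⟩
  have hnmc2 : ¬ MatchingCovered (G.deleteEdges {s(a2, b2)}) := fun h =>
    hnr2 ⟨(SimpleGraph.mem_edgeSet _).mpr he2, h⟩
  obtain ⟨f, hf, hPA⟩ := key hle2 hH hnmc2 (fun e' he'G he'ne => by
    by_cases h1 : e' = s(a1, b1)
    · exact Or.inr h1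
    · refine Or.inl ?_
      rw [edgeSet_deleteEdges]
      exact ⟨he'G, by simp [h1, he'ne]⟩)
  have hf' : f = s(a1, b1) := hf
  subst hf'
  have claimA : ∀ M : Subgraph G, M.IsPerfectMatching →
      s(a1, b1) ∈ M.edgeSet → s(a2, b2) ∈ M.edgeSet := hPA
  -- A perfect matching of G containing e1 (hence e2).
  obtain ⟨M, hM, hE1M⟩ := pm_extend he1 (hG.2 a1 b1 he1.ne)
  have hE2M : s(a2, b2) ∈ M.edgeSet := claimA M hM hE1M
  -- Every edge in the set belongs to M.
  have claimE : ∀ e ∈ {e : Sym2 V | v ∈ e ∧ e ≠ s(a1, b1) ∧ e ≠ s(a2, b2) ∧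
      e ∈ G.edgeSet ∧ ¬ Removable G e ∧
      Removable (G.deleteEdges {s(a1, b1), s(a2, b2)}) e}, e ∈ M.edgeSet := by
    rintro e ⟨hv, hne1, hne2, heG, hnr, hremH⟩
    have hKle : (G.deleteEdges {s(a1, b1), s(a2, b2)}).deleteEdges {e} ≤
        G.deleteEdges {e} := by
      intro x y hxy
      rw [deleteEdges_adj] at hxy ⊢
      rw [deleteEdges_adj] at hxy
      exact ⟨hxy.1.1, hxy.2⟩
    have hnmc : ¬ MatchingCovered (G.deleteEdges {e}) := fun h => hnr ⟨heG, h⟩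
    obtain ⟨f, hf, hP⟩ := key hKle hremH.2 hnmc (fun e' he'G he'ne => by
      by_cases h12 : e' ∈ ({s(a1, b1), s(a2, b2)} : Set (Sym2 V))
      · exact Or.inr h12
      · refine Or.inl ?_
        rw [edgeSet_deleteEdges, edgeSet_deleteEdges]
        exact ⟨⟨he'G, h12⟩, by simpa using he'ne⟩)
    rcases hf with hf | hf
    · exact hP M hM (hf ▸ hE1M)
    · exact hP M hM ((Set.mem_singleton_iff.mp hf) ▸ hE2M)
  rw [Set.ncard_le_one_iff (Set.toFinite _)]
  rintro e f he hf
  have heM := claimE e he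
  have hfM := claimE f hf
  obtain ⟨y, rfl⟩ := Sym2.mem_iff_exists.mp he.1
  obtain ⟨z, rfl⟩ := Sym2.mem_iff_exists.mp hf.1
  have hy : M.Adj v y := Subgraph.mem_edgeSet.mp heM
  have hz : M.Adj v z := Subgraph.mem_edgeSet.mp hfM
  obtain ⟨w, -, hwu⟩ := hM.1 (hM.2 v)
  rw [hwu y hy, hwu z hz]
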